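/- Let (E,d,ρ) and (E',d',ρ') be pointed complete, locally compact length spaces, fix r ≥ 0, and let R ⊆ E × E' satisfy: (ρ,ρ') ∈ R; for every x in the closed ball B_r(E) around ρ there exists x' ∈ E' with (x,x') ∈ R; and for every y' ∈ B_r(E') there exists y ∈ E with (y,y') ∈ R. Then the pointed Gromov–Hausdorff distance between B_r(E) and B_r(E') is at most (3/2)·dis(R), where dis(R) = sup{|d(x,y) − d'(x',y')| : (x,x'),(y,y') ∈ R}. -/

import Mathlib

open Metric
open scoped ENNReal unitInterval

/-- The distortion of a relation `R ⊆ E × E'` between two metric spaces: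
`sup {|d(x,y) - d'(x',y')| : (x,x'), (y,y') ∈ R}` (valued in `ℝ≥0∞`). -/
noncomputable def relDistortion {E E' : Type*} [MetricSpace E] [MetricSpace E']
    (R : Set (E × E')) : ℝ≥0∞ :=
  ⨆ (p : R) (q : R), ENNReal.ofReal |dist p.1.1 q.1.1 - dist p.1.2 q.1.2|

/-- The pointed Gromov–Hausdorff distance between pointed metric spaces, defined as half the
infimum of distortions over all correspondences containing the pair of distinguished points. -/
noncomputable def pGHDist (X : Type*) (Y : Type*) [MetricSpace X] [MetricSpace Y]
    (x : X) (y : Y) : ℝ≥0∞ :=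
  (1 / 2) * ⨅ (R : Set (X × Y)) (_ : (x, y) ∈ R) (_ : ∀ a : X, ∃ b : Y, (a, b) ∈ R)
      (_ : ∀ b : Y, ∃ a : X, (a, b) ∈ R), relDistortion R

/-- A metric space is a length space if the distance between any two points is the infimum of
the lengths (total variations) of continuous paths joining them. -/
def IsLengthSpace (E : Type*) [MetricSpace E] : Prop :=
  ∀ x y : E, ENNReal.ofReal (dist x y) = ⨅ γ : Path x y, eVariationOn (⇑γ) Set.univ

lemma length_space_proj {F : Type*} [MetricSpace F] (hF : IsLengthSpace F)
    (ρ x : F) {r c δ : ℝ} (hr : 0 ≤ r) (hc : 0 ≤ c) (hδ : 0 < δ)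
    (hx : dist ρ x ≤ r + c) :
    ∃ z : F, dist ρ z ≤ r ∧ dist z x ≤ c + 2 * δ := by
  by_cases hxr : dist ρ x ≤ r
  · exact ⟨x, hxr, by simp; linarith⟩
  push_neg at hxr
  set d := dist ρ x with hd
  have hd0 : 0 < d + δ := by have := dist_nonneg (x := ρ) (y := x); linarith
  have h0 : ENNReal.ofReal d < ENNReal.ofReal (d + δ) :=
    (ENNReal.ofReal_lt_ofReal_iff hd0).2 (by linarith)
  rw [hF ρ x] at h0
  obtain ⟨γ, hγ⟩ := iInf_lt_iff.1 h0
  have hfin : eVariationOn (⇑γ) Set.univ ≠ ⊤ := hγ.ne_top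
  set L := (eVariationOn (⇑γ) Set.univ).toReal with hLdef
  have hL : L < d + δ := (ENNReal.lt_ofReal_iff_toReal_lt hfin).1 hγ
  -- uniform continuity
  obtain ⟨δ', hδ', huc⟩ := Metric.uniformContinuous_iff.1
    (CompactSpace.uniformContinuous_of_continuous γ.continuous) δ hδ
  obtain ⟨m, hm⟩ := exists_nat_one_div_lt hδ'
  set N := m + 1 with hN
  have hNpos : 0 < (N : ℝ) := by positivity
  set u : ℕ → I := fun i => Set.projIcc (0:ℝ) 1 zero_le_one ((i : ℝ) / N) with hu_def
  have hu : Monotone u := fun i j h => Set.monotone_projIcc zero_le_one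
    (by have hij : (i:ℝ) ≤ j := by exact_mod_cast h
        gcongr)
  set f : ℕ → F := fun i => γ (u i) with hf_def
  have hf0 : f 0 = ρ := by
    have : u 0 = 0 := Subtype.ext (by simp [hu_def])
    simp [hf_def, this]
  have hfN : f N = x := by
    have : u N = 1 := Subtype.ext (by simp [hu_def, div_self hNpos.ne'])
    simp [hf_def, this]
  have hstep : ∀ i, dist (f i) (f (i + 1)) ≤ δ := by
    intro i
    refine (huc ?_).le
    rw [Subtype.dist_eq, Real.dist_eq]
    calc |(u i : ℝ) - (u (i+1) : ℝ)| ≤ |(i : ℝ)/N - ((i+1 : ℕ) : ℝ)/N| :=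
          Set.abs_projIcc_sub_projIcc zero_le_one
      _ = 1 / N := by
          rw [abs_sub_comm, show ((i+1 : ℕ) : ℝ)/N - (i : ℝ)/N = 1/N by push_cast; ring]
          exact abs_of_pos (by positivity)
      _ < δ' := by
          have hNm : (N : ℝ) = (m : ℝ) + 1 := by rw [hN]; push_cast; ring
          rw [hNm]; exact hm
  set S : ℕ → ℝ := fun k => ∑ i ∈ Finset.range k, dist (f i) (f (i + 1)) with hS_def
  have hS_nonneg : ∀ k, 0 ≤ S k := fun k => Finset.sum_nonneg fun _ _ => dist_nonneg
  have hS_le_L : ∀ k, S k ≤ L := by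
    intro k
    have h1 : ENNReal.ofReal (S k) ≤ eVariationOn (⇑γ) Set.univ := by
      rw [hS_def, ENNReal.ofReal_sum_of_nonneg (fun _ _ => dist_nonneg)]
      calc ∑ i ∈ Finset.range k, ENNReal.ofReal (dist (f i) (f (i+1)))
          = ∑ i ∈ Finset.range k, edist (⇑γ (u (i+1))) (⇑γ (u i)) := by
            refine Finset.sum_congr rfl fun i _ => ?_
            rw [edist_dist, dist_comm]
        _ ≤ _ := eVariationOn.sum_le (n := k) hu fun i => Set.mem_univ _
    have := ENNReal.toReal_mono hfin h1
    rwa [ENNReal.toReal_ofReal (hS_nonneg k)] at this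
  have hρk : ∀ k, dist ρ (f k) ≤ S k := by
    intro k
    have := dist_le_range_sum_dist f k
    rwa [hf0] at this
  have hkx : ∀ k, k ≤ N → dist (f k) x ≤ S N - S k := by
    intro k hk
    have h1 := dist_le_Ico_sum_dist f hk
    rw [hfN] at h1
    have h2 : ∑ i ∈ Finset.Ico k N, dist (f i) (f (i+1)) = S N - S k := by
      simp only [hS_def]
      exact Finset.sum_Ico_eq_sub _ hk
    linarith
  have hdSN : d ≤ S N := by
    have := dist_le_range_sum_dist f N
    rwa [hf0, hfN] at this
  have hex : ∃ k, r - δ < S k := ⟨N, by linarith⟩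
  set k := Nat.find hex with hk_def
  have hk1 : r - δ < S k := Nat.find_spec hex
  have hkN : k ≤ N := Nat.find_le (by linarith)
  have hSk_le_r : S k ≤ r := by
    rcases Nat.eq_zero_or_pos k with h0 | h0
    · rw [h0]; simpa [hS_def] using hr
    · obtain ⟨j, hj⟩ := Nat.exists_eq_succ_of_ne_zero h0.ne'
      have hjlt : j < Nat.find hex := by rw [← hk_def]; omega
      have hj' : ¬ (r - δ < S j) := Nat.find_min hex hjlt
      push_neg at hj'
      have hsum : S (j+1) = S j + dist (f j) (f (j+1)) := by
        simp only [hS_def]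
        exact Finset.sum_range_succ _ _
      rw [hj, Nat.succ_eq_add_one, hsum]
      have := hstep j
      linarith
  refine ⟨f k, (hρk k).trans hSk_le_r, ?_⟩
  have := hkx k hkN
  have h2 := hS_le_L N
  linarith

/-- If `(E,d,ρ)`, `(E',d',ρ')` are pointed complete locally compact length spaces, `r ≥ 0`, and
`R ⊆ E × E'` contains `(ρ,ρ')`, covers `B_r(E)` on the left and `B_r(E')` on the right, then
the pointed Gromov–Hausdorff distance between the closed balls `B_r(E)` and `B_r(E')` is at
most `(3/2)·dis(R)`. -/
theorem pGHDist_balls_le {E E' : Type*} [MetricSpace E] [MetricSpace E']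
    [CompleteSpace E] [CompleteSpace E'] [LocallyCompactSpace E] [LocallyCompactSpace E']
    (hE : IsLengthSpace E) (hE' : IsLengthSpace E')
    (r : ℝ) (hr : 0 ≤ r) (ρ : E) (ρ' : E') (R : Set (E × E'))
    (hρ : (ρ, ρ') ∈ R)
    (h1 : ∀ x ∈ closedBall ρ r, ∃ x' : E', (x, x') ∈ R)
    (h2 : ∀ y' ∈ closedBall ρ' r, ∃ y : E, (y, y') ∈ R) :
    pGHDist (closedBall ρ r) (closedBall ρ' r)
        ⟨ρ, mem_closedBall_self hr⟩ ⟨ρ', mem_closedBall_self hr⟩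
      ≤ (3 / 2) * relDistortion R := by
  by_cases hD : relDistortion R = ⊤
  · rw [hD, ENNReal.mul_top (by norm_num)]
    exact le_top
  set ε : ℝ := (relDistortion R).toReal with hε_def
  have hε : 0 ≤ ε := ENNReal.toReal_nonneg
  have hkey : ∀ ⦃a : E⦄ ⦃a' : E'⦄ ⦃b : E⦄ ⦃b' : E'⦄, (a, a') ∈ R → (b, b') ∈ R →
      |dist a b - dist a' b'| ≤ ε := by
    intro a a' b b' h h'
    have h1 : ENNReal.ofReal |dist a b - dist a' b'| ≤ relDistortion R :=
      le_iSup₂ (f := fun (p : R) (q : R) =>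
        ENNReal.ofReal |dist p.1.1 q.1.1 - dist p.1.2 q.1.2|) ⟨(a, a'), h⟩ ⟨(b, b'), h'⟩
    exact (ENNReal.ofReal_le_iff_le_toReal hD).1 h1
  apply ENNReal.le_of_forall_pos_le_add
  intro η hη _
  set δ : ℝ := (η : ℝ) / 4 with hδ_def
  have hδ : 0 < δ := by positivity
  set c : ℝ := ε + 2 * δ with hc_def
  have hc : 0 ≤ c := by positivity
  set X := ↥(closedBall ρ r)
  set Y := ↥(closedBall ρ' r)
  set S : Set (X × Y) := {p | (∃ x', (↑p.1, x') ∈ R ∧ dist (p.2 : E') x' ≤ c) ∨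
    ∃ y, (y, (p.2 : E')) ∈ R ∧ dist (p.1 : E) y ≤ c} with hS_def
  have hS0 : ((⟨ρ, mem_closedBall_self hr⟩ : X), (⟨ρ', mem_closedBall_self hr⟩ : Y)) ∈ S :=
    Or.inl ⟨ρ', hρ, by simpa using hc⟩
  have hS1 : ∀ a : X, ∃ b : Y, (a, b) ∈ S := by
    intro a
    obtain ⟨x', hx'⟩ := h1 a a.2
    have hax : dist ρ' x' ≤ r + ε := by
      have hd := hkey hρ hx'
      have ha : dist (a : E) ρ ≤ r := mem_closedBall.1 a.2
      rw [abs_sub_le_iff] at hd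
      rw [dist_comm] at ha
      linarith [hd.2]
    obtain ⟨z, hz1, hz2⟩ := length_space_proj hE' ρ' x' hr hε hδ hax
    exact ⟨⟨z, mem_closedBall.2 (by rwa [dist_comm])⟩, Or.inl ⟨x', hx', hz2⟩⟩
  have hS2 : ∀ b : Y, ∃ a : X, (a, b) ∈ S := by
    intro b
    obtain ⟨y, hy⟩ := h2 b b.2
    have hby : dist ρ y ≤ r + ε := by
      have hd := hkey hρ hy
      have hb : dist (b : E') ρ' ≤ r := mem_closedBall.1 b.2
      rw [abs_sub_le_iff] at hd
      rw [dist_comm] at hb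
      linarith [hd.1]
    obtain ⟨z, hz1, hz2⟩ := length_space_proj hE ρ y hr hε hδ hby
    exact ⟨⟨z, mem_closedBall.2 (by rwa [dist_comm])⟩, Or.inr ⟨y, hy, hz2⟩⟩
  have hdis : relDistortion S ≤ ENNReal.ofReal (3 * ε + 4 * δ) := by
    refine iSup₂_le fun p q => ENNReal.ofReal_le_ofReal ?_
    obtain ⟨⟨x, z⟩, hp⟩ := p
    obtain ⟨⟨y, w⟩, hq⟩ := q
    simp only [Subtype.dist_eq]
    rcases hp with ⟨x', hx'R, hzx'⟩ | ⟨a, haR, hxa⟩ <;>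
      rcases hq with ⟨y', hy'R, hwy'⟩ | ⟨b, hbR, hyb⟩
    · replace hzx' : dist (z:E') x' ≤ c := hzx'
      replace hwy' : dist (w:E') y' ≤ c := hwy'
      have t1 := abs_sub_le (dist (x:E) y) (dist x' y') (dist (z:E') w)
      have t2 : |dist (x:E) (y:E) - dist x' y'| ≤ ε := hkey hx'R hy'R
      have t3 : |dist x' y' - dist (z:E') w| ≤ dist x' (z:E') + dist y' (w:E') := by
        have := dist_dist_dist_le x' y' (z:E') (w:E')
        rwa [Real.dist_eq] at this
      rw [dist_comm x' (z:E'), dist_comm y' (w:E')] at t3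
      show |dist (x:E) (y:E) - dist (z:E') (w:E')| ≤ 3*ε+4*δ
      linarith
    · replace hzx' : dist (z:E') x' ≤ c := hzx'
      replace hyb : dist (y:E) b ≤ c := hyb
      have t1 := abs_sub_le (dist (x:E) y) (dist (x:E) b) (dist (z:E') w)
      have t2 := abs_sub_le (dist (x:E) b) (dist x' (w:E')) (dist (z:E') w)
      have t3 : |dist (x:E) (y:E) - dist (x:E) b| ≤ dist (x:E) (x:E) + dist (y:E) b := by
        have := dist_dist_dist_le (x:E) (y:E) (x:E) b
        rwa [Real.dist_eq] at this
      have t4 : |dist (x:E) b - dist x' (w:E')| ≤ ε := hkey hx'R hbR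
      have t5 : |dist x' (w:E') - dist (z:E') (w:E')| ≤ dist x' (z:E') + dist (w:E') (w:E') := by
        have := dist_dist_dist_le x' (w:E') (z:E') (w:E')
        rwa [Real.dist_eq] at this
      rw [dist_comm x' (z:E')] at t5
      simp only [dist_self] at t3 t5
      show |dist (x:E) (y:E) - dist (z:E') (w:E')| ≤ 3*ε+4*δ
      linarith
    · replace hxa : dist (x:E) a ≤ c := hxa
      replace hwy' : dist (w:E') y' ≤ c := hwy'
      have t1 := abs_sub_le (dist (x:E) y) (dist a (y:E)) (dist (z:E') w)
      have t2 := abs_sub_le (dist a (y:E)) (dist (z:E') y') (dist (z:E') w)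
      have t3 : |dist (x:E) (y:E) - dist a (y:E)| ≤ dist (x:E) a + dist (y:E) (y:E) := by
        have := dist_dist_dist_le (x:E) (y:E) a (y:E)
        rwa [Real.dist_eq] at this
      have t4 : |dist a (y:E) - dist (z:E') y'| ≤ ε := hkey haR hy'R
      have t5 : |dist (z:E') y' - dist (z:E') (w:E')| ≤ dist (z:E') (z:E') + dist y' (w:E') := by
        have := dist_dist_dist_le (z:E') y' (z:E') (w:E')
        rwa [Real.dist_eq] at this
      rw [dist_comm y' (w:E')] at t5
      simp only [dist_self] at t3 t5
      show |dist (x:E) (y:E) - dist (z:E') (w:E')| ≤ 3*ε+4*δ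
      linarith
    · replace hxa : dist (x:E) a ≤ c := hxa
      replace hyb : dist (y:E) b ≤ c := hyb
      have t1 := abs_sub_le (dist (x:E) y) (dist a b) (dist (z:E') w)
      have t2 : |dist (x:E) (y:E) - dist a b| ≤ dist (x:E) a + dist (y:E) b := by
        have := dist_dist_dist_le (x:E) (y:E) a b
        rwa [Real.dist_eq] at this
      have t3 : |dist a b - dist (z:E') (w:E')| ≤ ε := hkey haR hbR
      show |dist (x:E) (y:E) - dist (z:E') (w:E')| ≤ 3*ε+4*δ
      linarith
  have hmain : pGHDist X Y ⟨ρ, mem_closedBall_self hr⟩ ⟨ρ', mem_closedBall_self hr⟩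
      ≤ (1 / 2) * ENNReal.ofReal (3 * ε + 4 * δ) := by
    refine mul_le_mul_right ?_ _
    exact iInf_le_of_le S (iInf_le_of_le hS0 (iInf_le_of_le hS1 (iInf_le_of_le hS2 hdis)))
  refine hmain.trans ?_
  have e1 : (1 / 2 : ℝ≥0∞) = ENNReal.ofReal (1 / 2) := by
    rw [ENNReal.ofReal_div_of_pos (by norm_num)]
    norm_num
  have e2 : (3 / 2 : ℝ≥0∞) = ENNReal.ofReal (3 / 2) := by
    rw [ENNReal.ofReal_div_of_pos (by norm_num)]
    norm_num
  have hDε : relDistortion R = ENNReal.ofReal ε := (ENNReal.ofReal_toReal hD).symm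
  calc (1 / 2 : ℝ≥0∞) * ENNReal.ofReal (3 * ε + 4 * δ)
      = ENNReal.ofReal ((1 / 2) * (3 * ε + 4 * δ)) := by
        rw [e1, ← ENNReal.ofReal_mul (by norm_num)]
    _ = ENNReal.ofReal ((3 / 2) * ε + 2 * δ) := by ring_nf
    _ = ENNReal.ofReal ((3 / 2) * ε) + ENNReal.ofReal (2 * δ) :=
        ENNReal.ofReal_add (by positivity) (by positivity)
    _ ≤ (3 / 2) * relDistortion R + η := by
        gcongr
        · rw [hDε, e2, ← ENNReal.ofReal_mul (by norm_num)]
        · have : (2 : ℝ) * δ ≤ (η : ℝ) := by rw [hδ_def]; linarith [hδ]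
          calc ENNReal.ofReal (2 * δ) ≤ ENNReal.ofReal (η : ℝ) := ENNReal.ofReal_le_ofReal this
            _ = (η : ℝ≥0∞) := ENNReal.ofReal_coe_nnreal
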